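/- Disintegration extends from C_c to L¹: let X, Y be locally compact second countable spaces, ω a Radon measure on X, ρ a Radon measure on Y, Ψ : X → Y an ω-measurable map, and {ω_y}_{y∈Y} a family of Radon measures on X with ω_y concentrated on Ψ⁻¹(y) and ∫_X φ dω = ∫_Y (∫_X φ dω_y) dρ(y) for all φ ∈ C_c(X). Then every ω-integrable f : X → ℂ is ω_y-integrable for ρ-almost every y, the function y ↦ ∫_X f dω_y is ρ-integrable, and ∫_X f dω = ∫_Y (∫_X f dω_y) dρ(y). Moreover the family {ω_y} is unique up to ρ-null modification. -/

import Mathlib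

open MeasureTheory Set Topology

section SeqMax

variable {X : Type*} [TopologicalSpace X]

/-- Pointwise maximum of the first `n+1` functions of a sequence. -/
noncomputable def seqMax (φ : ℕ → X → ℝ) : ℕ → X → ℝ
  | 0 => φ 0
  | n + 1 => fun x => max (seqMax φ n x) (φ (n + 1) x)

lemma le_seqMax_self (φ : ℕ → X → ℝ) (n : ℕ) (x : X) : φ n x ≤ seqMax φ n x := by
  cases n with
  | zero => exact le_rfl
  | succ n => exact le_max_right _ _

lemma seqMax_mono (φ : ℕ → X → ℝ) {m n : ℕ} (h : m ≤ n) (x : X) :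
    seqMax φ m x ≤ seqMax φ n x := by
  induction n with
  | zero => simpa [Nat.le_zero.1 h] using le_rfl
  | succ n ih =>
    rcases Nat.le_succ_iff.mp h with h' | rfl
    · exact le_trans (ih h') (le_max_left _ _)
    · exact le_rfl

lemma seqMax_continuous {φ : ℕ → X → ℝ} (hφ : ∀ n, Continuous (φ n)) (n : ℕ) :
    Continuous (seqMax φ n) := by
  induction n with
  | zero => exact hφ 0
  | succ n ih => exact ih.max (hφ (n + 1))

lemma seqMax_hasCompactSupport {φ : ℕ → X → ℝ} (hφ : ∀ n, HasCompactSupport (φ n)) (n : ℕ) :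
    HasCompactSupport (seqMax φ n) := by
  induction n with
  | zero => exact hφ 0
  | succ n ih => exact ih.comp₂_left (hφ (n + 1)) (max_self 0)

lemma seqMax_mem_Icc {φ : ℕ → X → ℝ} (hφ : ∀ n x, φ n x ∈ Icc (0 : ℝ) 1) (n : ℕ) (x : X) :
    seqMax φ n x ∈ Icc (0 : ℝ) 1 := by
  induction n with
  | zero => exact hφ 0 x
  | succ n ih =>
    exact ⟨le_max_of_le_left ih.1, max_le ih.2 (hφ (n + 1) x).2⟩

lemma seqMax_eq_zero {φ : ℕ → X → ℝ} {x : X} (hφ : ∀ n, φ n x = 0) (n : ℕ) :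
    seqMax φ n x = 0 := by
  induction n with
  | zero => exact hφ 0
  | succ n ih => simp [seqMax, ih, hφ (n + 1)]

end SeqMax

section Aux
variable {X : Type*} [TopologicalSpace X] [LocallyCompactSpace X]
  [SecondCountableTopology X] [T2Space X]

/-- In a locally compact second countable space, any open set is the monotone union of
a sequence of compact subsets. -/
lemma exists_compact_seq {V : Set X} (hV : IsOpen V) :
    ∃ K : ℕ → Set X, (∀ n, IsCompact (K n)) ∧ Monotone K ∧ (∀ n, K n ⊆ V) ∧ ⋃ n, K n = V := by
  rcases V.eq_empty_or_nonempty with rfl | hne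
  · exact ⟨fun _ => ∅, fun _ => isCompact_empty, monotone_const, fun _ => Subset.rfl, by simp⟩
  · have hx : ∀ x : V, ∃ K : Set X, IsCompact K ∧ (x : X) ∈ interior K ∧ K ⊆ V :=
      fun x => exists_compact_subset hV x.2
    choose k hkc hki hkV using hx
    obtain ⟨T, hTc, hTU⟩ := TopologicalSpace.isOpen_iUnion_countable
      (fun x : V => interior (k x)) (fun _ => isOpen_interior)
    have hTne : T.Nonempty := by
      rcases hne with ⟨x, hxV⟩
      by_contra h
      rw [not_nonempty_iff_eq_empty] at h
      have : (x : X) ∈ ⋃ x : V, interior (k x) := mem_iUnion.2 ⟨⟨x, hxV⟩, hki _⟩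
      rw [← hTU, h] at this
      simp at this
    obtain ⟨e, hTe⟩ := hTc.exists_eq_range hTne
    refine ⟨fun n => ⋃ i ∈ Finset.range (n + 1), k (e i), ?_, ?_, ?_, ?_⟩
    · intro n
      exact (Finset.range (n + 1)).isCompact_biUnion (fun i _ => hkc _)
    · intro m n hmn
      exact Set.biUnion_subset_biUnion_left
        (Finset.coe_subset.mpr (Finset.range_subset_range.mpr (by omega)))
    · intro n
      exact Set.iUnion₂_subset fun i _ => hkV _
    · apply Subset.antisymm
      · exact Set.iUnion_subset fun n => Set.iUnion₂_subset fun i _ => hkV _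
      · intro x hxV
        have h1 : x ∈ ⋃ x : V, interior (k x) := mem_iUnion.2 ⟨⟨x, hxV⟩, hki _⟩
        rw [← hTU] at h1
        obtain ⟨i, hiT, hxi⟩ := mem_iUnion₂.1 h1
        rw [hTe] at hiT
        obtain ⟨m, rfl⟩ := hiT
        exact mem_iUnion.2 ⟨m, mem_iUnion₂.2 ⟨m, Finset.self_mem_range_succ m,
          interior_subset hxi⟩⟩

/-- A monotone sequence of compactly supported continuous nonnegative functions whose
(pointwise) supremum is the indicator of a given open set. -/
lemma exists_cc_seq {V : Set X} (hV : IsOpen V) :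
    ∃ ψ : ℕ → X → ℝ, (∀ n, Continuous (ψ n)) ∧ (∀ n, HasCompactSupport (ψ n)) ∧
      (∀ n x, 0 ≤ ψ n x) ∧ (∀ m n, m ≤ n → ∀ x, ψ m x ≤ ψ n x) ∧
      (∀ x, (⨆ n, ENNReal.ofReal (ψ n x)) = V.indicator (fun _ => (1 : ENNReal)) x) := by
  obtain ⟨K, hKc, hKm, hKV, hKU⟩ := exists_compact_seq hV
  have hφ : ∀ n : ℕ, ∃ φ : C(X, ℝ), EqOn φ 1 (K n) ∧ EqOn φ 0 Vᶜ ∧ HasCompactSupport φ ∧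
      ∀ x, φ x ∈ Icc (0 : ℝ) 1 := fun n =>
    exists_continuous_one_zero_of_isCompact (hKc n) hV.isClosed_compl
      (disjoint_compl_right_iff_subset.2 (hKV n))
  choose φ hφ1 hφ0 hφc hφ01 using hφ
  refine ⟨seqMax (fun n x => φ n x), seqMax_continuous (fun n => (φ n).continuous),
    seqMax_hasCompactSupport (fun n => hφc n), fun n x => (seqMax_mem_Icc hφ01 n x).1,
    fun m n h x => seqMax_mono _ h x, fun x => ?_⟩
  by_cases hx : x ∈ V
  · have hx1 : ∀ n, ENNReal.ofReal (seqMax (fun n x => φ n x) n x) ≤ 1 := fun n => by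
      simpa using ENNReal.ofReal_le_ofReal (seqMax_mem_Icc hφ01 n x).2
    obtain ⟨n, hn⟩ : ∃ n, x ∈ K n := by
      have := hKU ▸ hx
      exact mem_iUnion.1 this
    have h1 : (1 : ENNReal) ≤ ENNReal.ofReal (seqMax (fun n x => φ n x) n x) := by
      have : (1 : ℝ) ≤ seqMax (fun n x => φ n x) n x := by
        have := le_seqMax_self (fun n x => φ n x) n x
        rw [show φ n x = 1 from hφ1 n hn] at this
        exact this
      simpa using ENNReal.ofReal_le_ofReal this
    rw [indicator_of_mem hx]
    exact le_antisymm (iSup_le hx1) (le_trans h1 (le_iSup (fun n => ENNReal.ofReal (seqMax (fun n x => φ n x) n x)) n))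
  · rw [indicator_of_notMem hx]
    have : ∀ n, seqMax (fun n x => φ n x) n x = 0 :=
      seqMax_eq_zero (fun n => hφ0 n hx)
    simp [this]

end Aux
open MeasureTheory Set Topology
section Meas
variable {X : Type*} [TopologicalSpace X] [LocallyCompactSpace X]
  [SecondCountableTopology X] [T2Space X] [MeasurableSpace X] [BorelSpace X]

/-- For any measure, the measure of an open set is the supremum of the lintegrals of a
pointwise-increasing sequence of functions converging to its indicator. -/
lemma measure_open_eq_iSup (μ : Measure X) {V : Set X} (hV : IsOpen V) {ψ : ℕ → X → ℝ}
    (hc : ∀ n, Continuous (ψ n)) (hmono : ∀ m n, m ≤ n → ∀ x, ψ m x ≤ ψ n x)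
    (hsup : ∀ x, (⨆ n, ENNReal.ofReal (ψ n x)) = V.indicator (fun _ => (1 : ENNReal)) x) :
    μ V = ⨆ n, ∫⁻ x, ENNReal.ofReal (ψ n x) ∂μ := by
  calc μ V = ∫⁻ x, V.indicator (fun _ => (1 : ENNReal)) x ∂μ :=
        (lintegral_indicator_one hV.measurableSet).symm
    _ = ∫⁻ x, ⨆ n, ENNReal.ofReal (ψ n x) ∂μ := lintegral_congr fun x => (hsup x).symm
    _ = ⨆ n, ∫⁻ x, ENNReal.ofReal (ψ n x) ∂μ :=
        lintegral_iSup (fun n => ENNReal.measurable_ofReal.comp (hc n).measurable)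
          (fun m n h x => ENNReal.ofReal_le_ofReal (hmono m n h x))

end Meas

section Main

variable {X Y : Type*}
    [TopologicalSpace X] [LocallyCompactSpace X] [SecondCountableTopology X] [T2Space X]
    [MeasurableSpace X] [BorelSpace X]
    [TopologicalSpace Y] [LocallyCompactSpace Y] [SecondCountableTopology Y] [T2Space Y]
    [MeasurableSpace Y] [BorelSpace Y]
    (ω : Measure X) [IsFiniteMeasureOnCompacts ω]
    (ρ : Measure Y) [IsFiniteMeasureOnCompacts ρ]
    (ωy : Y → Measure X) [∀ y, IsFiniteMeasureOnCompacts (ωy y)]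

theorem disint_lintegral
    (hdis : ∀ φ : X → ℝ, Continuous φ → HasCompactSupport φ →
      Integrable (fun y => ∫ x, φ x ∂(ωy y)) ρ ∧
      ∫ x, φ x ∂ω = ∫ y, (∫ x, φ x ∂(ωy y)) ∂ρ) :
    ∀ g : X → ENNReal, Measurable g →
      AEMeasurable (fun y => ∫⁻ x, g x ∂(ωy y)) ρ ∧
      ∫⁻ x, g x ∂ω = ∫⁻ y, (∫⁻ x, g x ∂(ωy y)) ∂ρ := by
  -- Step 1: compactly supported continuous nonneg functions
  have step1 : ∀ φ : X → ℝ, Continuous φ → HasCompactSupport φ → (∀ x, 0 ≤ φ x) →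
      AEMeasurable (fun y => ∫⁻ x, ENNReal.ofReal (φ x) ∂(ωy y)) ρ ∧
      ∫⁻ x, ENNReal.ofReal (φ x) ∂ω = ∫⁻ y, (∫⁻ x, ENNReal.ofReal (φ x) ∂(ωy y)) ∂ρ := by
    intro φ hc hcs h0
    have hkey : ∀ (μ : Measure X) [IsFiniteMeasureOnCompacts μ],
        ∫⁻ x, ENNReal.ofReal (φ x) ∂μ = ENNReal.ofReal (∫ x, φ x ∂μ) := by
      intro μ _
      exact (ofReal_integral_eq_lintegral_ofReal (hc.integrable_of_hasCompactSupport hcs)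
        (Filter.Eventually.of_forall h0)).symm
    have hmeas : AEMeasurable (fun y => ENNReal.ofReal (∫ x, φ x ∂(ωy y))) ρ :=
      ENNReal.measurable_ofReal.comp_aemeasurable
        (hdis φ hc hcs).1.aestronglyMeasurable.aemeasurable
    constructor
    · exact hmeas.congr (Filter.Eventually.of_forall fun y => (hkey (ωy y)).symm)
    · rw [hkey ω, (hdis φ hc hcs).2,
        ofReal_integral_eq_lintegral_ofReal (hdis φ hc hcs).1
          (Filter.Eventually.of_forall fun y => integral_nonneg h0)]
      exact lintegral_congr fun y => (hkey (ωy y)).symm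
  -- Step 2: open sets
  have step2 : ∀ V : Set X, IsOpen V →
      AEMeasurable (fun y => ωy y V) ρ ∧ ω V = ∫⁻ y, ωy y V ∂ρ := by
    intro V hV
    obtain ⟨ψ, hc, hcs, h0, hmono, hsup⟩ := exists_cc_seq hV
    have key : ∀ (μ : Measure X) [IsFiniteMeasureOnCompacts μ],
        μ V = ⨆ n, ∫⁻ x, ENNReal.ofReal (ψ n x) ∂μ :=
      fun μ _ => measure_open_eq_iSup μ hV hc hmono hsup
    have s1 := fun n => step1 (ψ n) (hc n) (hcs n) (h0 n)
    have hmono' : ∀ y, Monotone fun n => ∫⁻ x, ENNReal.ofReal (ψ n x) ∂(ωy y) :=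
      fun y m n h => lintegral_mono fun x => ENNReal.ofReal_le_ofReal (hmono m n h x)
    constructor
    · have he : (fun y => ωy y V) = fun y => ⨆ n, ∫⁻ x, ENNReal.ofReal (ψ n x) ∂(ωy y) :=
        funext fun y => key (ωy y)
      rw [he]
      exact AEMeasurable.iSup (fun n => (s1 n).1)
    · rw [key ω]
      calc (⨆ n, ∫⁻ x, ENNReal.ofReal (ψ n x) ∂ω)
          = ⨆ n, ∫⁻ y, (∫⁻ x, ENNReal.ofReal (ψ n x) ∂(ωy y)) ∂ρ := by
            exact iSup_congr fun n => (s1 n).2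
        _ = ∫⁻ y, ⨆ n, (∫⁻ x, ENNReal.ofReal (ψ n x) ∂(ωy y)) ∂ρ :=
            (lintegral_iSup' (fun n => (s1 n).1)
              (Filter.Eventually.of_forall fun y => hmono' y)).symm
        _ = ∫⁻ y, ωy y V ∂ρ := lintegral_congr fun y => (key (ωy y)).symm
  -- Step 3: all measurable sets
  have step3 : ∀ A : Set X, MeasurableSet A →
      AEMeasurable (fun y => ωy y A) ρ ∧ ω A = ∫⁻ y, ωy y A ∂ρ := by
    have K := CompactExhaustion.choice X
    set U : ℕ → Set X := fun n => interior (K (n + 1)) with hU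
    have hUopen : ∀ n, IsOpen (U n) := fun n => isOpen_interior
    have hUmono : Monotone U := fun m n h => interior_mono (K.subset (by omega))
    have hUuniv : ⋃ n, U n = univ := by
      apply Subset.antisymm (subset_univ _)
      intro x _
      obtain ⟨n, hn⟩ := iUnion_eq_univ_iff.1 K.iUnion_eq x
      exact mem_iUnion.2 ⟨n, interior_mono (K.subset (by omega)) (K.subset_interior_succ n hn)⟩
    have hUfin : ∀ (μ : Measure X) [IsFiniteMeasureOnCompacts μ], ∀ n, μ (U n) ≠ ⊤ := by
      intro μ _ n
      exact ((measure_mono interior_subset).trans_lt (K.isCompact _).measure_lt_top).ne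
    -- restricted to U n
    have main_n : ∀ n (A : Set X), MeasurableSet A →
        AEMeasurable (fun y => ωy y (A ∩ U n)) ρ ∧ ω (A ∩ U n) = ∫⁻ y, ωy y (A ∩ U n) ∂ρ := by
      intro n
      have hgen : (‹_› : MeasurableSpace X) = MeasurableSpace.generateFrom {s : Set X | IsOpen s} :=
        BorelSpace.measurable_eq (α := X)
      refine MeasurableSpace.induction_on_inter hgen isPiSystem_isOpen ?_ ?_ ?_ ?_
      · simp only [Set.empty_inter]
        refine ⟨by simp, by simp⟩
      · intro t ht
        exact step2 (t ∩ U n) (ht.inter (hUopen n))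
      · intro t htm ⟨ih1, ih2⟩
        have hBm : MeasurableSet (t ∩ U n) := htm.inter (hUopen n).measurableSet
        have hset : tᶜ ∩ U n = U n \ (t ∩ U n) := by
          ext x; simp only [mem_inter_iff, mem_compl_iff, mem_diff]; tauto
        have hdiff : ∀ (μ : Measure X) [IsFiniteMeasureOnCompacts μ],
            μ (tᶜ ∩ U n) = μ (U n) - μ (t ∩ U n) := by
          intro μ _
          rw [hset]
          exact measure_diff inter_subset_right hBm.nullMeasurableSet
            (((measure_mono inter_subset_right).trans_lt
              (lt_top_iff_ne_top.2 (hUfin μ n))).ne)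
        have hfin' : ∫⁻ y, ωy y (t ∩ U n) ∂ρ ≠ ⊤ := by
          rw [← ih2]
          exact ((measure_mono inter_subset_right).trans_lt
            (lt_top_iff_ne_top.2 (hUfin ω n))).ne
        constructor
        · refine AEMeasurable.congr ((step2 (U n) (hUopen n)).1.sub ih1) ?_
          exact Filter.Eventually.of_forall fun y => (hdiff (ωy y)).symm
        · calc ω (tᶜ ∩ U n) = ω (U n) - ω (t ∩ U n) := hdiff ω
            _ = (∫⁻ y, ωy y (U n) ∂ρ) - ∫⁻ y, ωy y (t ∩ U n) ∂ρ := by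
                rw [(step2 (U n) (hUopen n)).2, ih2]
            _ = ∫⁻ y, (ωy y (U n) - ωy y (t ∩ U n)) ∂ρ := by
                rw [← lintegral_sub' ih1 hfin'
                  (Filter.Eventually.of_forall fun y => measure_mono inter_subset_right)]
            _ = ∫⁻ y, ωy y (tᶜ ∩ U n) ∂ρ :=
                lintegral_congr fun y => (hdiff (ωy y)).symm
      · intro f hdisj hfm ih
        have hBm : ∀ i, MeasurableSet (f i ∩ U n) := fun i => (hfm i).inter (hUopen n).measurableSet
        have hBdisj : Pairwise (Function.onFun Disjoint fun i => f i ∩ U n) := fun i j hij =>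
          ((hdisj hij).mono inter_subset_left inter_subset_left)
        have hset : (⋃ i, f i) ∩ U n = ⋃ i, (f i ∩ U n) := iUnion_inter _ _
        have hsum : ∀ (μ : Measure X), μ ((⋃ i, f i) ∩ U n) = ∑' i, μ (f i ∩ U n) := by
          intro μ
          rw [hset, measure_iUnion hBdisj hBm]
        constructor
        · refine AEMeasurable.congr (AEMeasurable.ennreal_tsum fun i => (ih i).1) ?_
          exact Filter.Eventually.of_forall fun y => (hsum (ωy y)).symm
        · calc ω ((⋃ i, f i) ∩ U n) = ∑' i, ω (f i ∩ U n) := hsum ω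
            _ = ∑' i, ∫⁻ y, ωy y (f i ∩ U n) ∂ρ := tsum_congr fun i => (ih i).2
            _ = ∫⁻ y, ∑' i, ωy y (f i ∩ U n) ∂ρ := (lintegral_tsum fun i => (ih i).1).symm
            _ = ∫⁻ y, ωy y ((⋃ i, f i) ∩ U n) ∂ρ :=
                lintegral_congr fun y => (hsum (ωy y)).symm
    intro A hA
    have hAeq : ∀ (μ : Measure X), μ A = ⨆ n, μ (A ∩ U n) := by
      intro μ
      have h2 : (⋃ n, A ∩ U n) = A := by rw [← inter_iUnion, hUuniv, inter_univ]
      calc μ A = μ (⋃ n, A ∩ U n) := by rw [h2]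
        _ = ⨆ n, μ (A ∩ U n) :=
            Monotone.measure_iUnion (fun m n h => inter_subset_inter_right _ (hUmono h))
    have hmono' : ∀ y, Monotone fun n => ωy y (A ∩ U n) :=
      fun y m n h => measure_mono (inter_subset_inter_right _ (hUmono h))
    constructor
    · have he : (fun y => ωy y A) = fun y => ⨆ n, ωy y (A ∩ U n) := funext fun y => hAeq (ωy y)
      rw [he]
      exact AEMeasurable.iSup (fun n => (main_n n A hA).1)
    · calc ω A = ⨆ n, ω (A ∩ U n) := hAeq ω
        _ = ⨆ n, ∫⁻ y, ωy y (A ∩ U n) ∂ρ := iSup_congr fun n => (main_n n A hA).2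
        _ = ∫⁻ y, ⨆ n, ωy y (A ∩ U n) ∂ρ :=
            (lintegral_iSup' (fun n => (main_n n A hA).1)
              (Filter.Eventually.of_forall fun y => hmono' y)).symm
        _ = ∫⁻ y, ωy y A ∂ρ := lintegral_congr fun y => (hAeq (ωy y)).symm
  -- Step 4: all measurable functions, by induction
  intro g₀ hg₀
  refine Measurable.ennreal_induction
    (motive := fun g => AEMeasurable (fun y => ∫⁻ x, g x ∂(ωy y)) ρ ∧
      ∫⁻ x, g x ∂ω = ∫⁻ y, (∫⁻ x, g x ∂(ωy y)) ∂ρ) ?_ ?_ ?_ hg₀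
  · intro c s hs
    have h1 : ∀ (μ : Measure X), ∫⁻ x, s.indicator (fun _ => c) x ∂μ = c * μ s := fun μ =>
      lintegral_indicator_const hs c
    constructor
    · refine AEMeasurable.congr ((step3 s hs).1.const_mul c) ?_
      exact Filter.Eventually.of_forall fun y => (h1 (ωy y)).symm
    · calc ∫⁻ x, s.indicator (fun _ => c) x ∂ω = c * ω s := h1 ω
        _ = c * ∫⁻ y, ωy y s ∂ρ := by rw [(step3 s hs).2]
        _ = ∫⁻ y, c * ωy y s ∂ρ := (lintegral_const_mul'' c (step3 s hs).1).symm
        _ = ∫⁻ y, (∫⁻ x, s.indicator (fun _ => c) x ∂(ωy y)) ∂ρ :=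
            lintegral_congr fun y => (h1 (ωy y)).symm
  · intro f g _ hf hgm ihf ihg
    have h1 : ∀ (μ : Measure X), ∫⁻ x, (f + g) x ∂μ = (∫⁻ x, f x ∂μ) + ∫⁻ x, g x ∂μ := fun μ =>
      lintegral_add_left hf g
    constructor
    · refine AEMeasurable.congr (ihf.1.add ihg.1) ?_
      exact Filter.Eventually.of_forall fun y => (h1 (ωy y)).symm
    · calc ∫⁻ x, (f + g) x ∂ω = (∫⁻ x, f x ∂ω) + ∫⁻ x, g x ∂ω := h1 ω
        _ = (∫⁻ y, (∫⁻ x, f x ∂(ωy y)) ∂ρ) + ∫⁻ y, (∫⁻ x, g x ∂(ωy y)) ∂ρ := by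
            rw [ihf.2, ihg.2]
        _ = ∫⁻ y, ((∫⁻ x, f x ∂(ωy y)) + ∫⁻ x, g x ∂(ωy y)) ∂ρ :=
            (lintegral_add_left' ihf.1 _).symm
        _ = ∫⁻ y, (∫⁻ x, (f + g) x ∂(ωy y)) ∂ρ := lintegral_congr fun y => (h1 (ωy y)).symm
  · intro f hfm hfmono ih
    have h1 : ∀ (μ : Measure X), ∫⁻ x, (⨆ n, f n x) ∂μ = ⨆ n, ∫⁻ x, f n x ∂μ := fun μ =>
      lintegral_iSup hfm hfmono
    have hmono' : ∀ y, Monotone fun n => ∫⁻ x, f n x ∂(ωy y) :=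
      fun y m n h => lintegral_mono fun x => hfmono h x
    constructor
    · refine AEMeasurable.congr (AEMeasurable.iSup fun n => (ih n).1) ?_
      exact Filter.Eventually.of_forall fun y => (h1 (ωy y)).symm
    · calc ∫⁻ x, (⨆ n, f n x) ∂ω = ⨆ n, ∫⁻ x, f n x ∂ω := h1 ω
        _ = ⨆ n, ∫⁻ y, (∫⁻ x, f n x ∂(ωy y)) ∂ρ := iSup_congr fun n => (ih n).2
        _ = ∫⁻ y, ⨆ n, (∫⁻ x, f n x ∂(ωy y)) ∂ρ :=
            (lintegral_iSup' (fun n => (ih n).1)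
              (Filter.Eventually.of_forall fun y => hmono' y)).symm
        _ = ∫⁻ y, (∫⁻ x, (⨆ n, f n x) ∂(ωy y)) ∂ρ := lintegral_congr fun y => (h1 (ωy y)).symm

end Main

section Derived

variable {X Y : Type*}
    [TopologicalSpace X] [LocallyCompactSpace X] [SecondCountableTopology X] [T2Space X]
    [MeasurableSpace X] [BorelSpace X]
    [TopologicalSpace Y] [LocallyCompactSpace Y] [SecondCountableTopology Y] [T2Space Y]
    [MeasurableSpace Y] [BorelSpace Y]
    (ω : Measure X) [IsFiniteMeasureOnCompacts ω]
    (ρ : Measure Y) [IsFiniteMeasureOnCompacts ρ]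
    (ωy : Y → Measure X) [∀ y, IsFiniteMeasureOnCompacts (ωy y)]
    (hdis : ∀ φ : X → ℝ, Continuous φ → HasCompactSupport φ →
      Integrable (fun y => ∫ x, φ x ∂(ωy y)) ρ ∧
      ∫ x, φ x ∂ω = ∫ y, (∫ x, φ x ∂(ωy y)) ∂ρ)

include hdis

theorem disint_null {N : Set X} (hN : MeasurableSet N) (h0 : ω N = 0) :
    ∀ᵐ y ∂ρ, ωy y N = 0 := by
  obtain ⟨hm, heq⟩ := disint_lintegral ω ρ ωy hdis (N.indicator fun _ => (1 : ENNReal))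
    (measurable_const.indicator hN)
  have hind : ∀ (μ : Measure X), ∫⁻ x, N.indicator (fun _ => (1 : ENNReal)) x ∂μ = μ N := by
    intro μ
    rw [lintegral_indicator_const hN, one_mul]
  rw [hind ω, h0] at heq
  have h2 := (lintegral_eq_zero_iff' hm).1 heq.symm
  filter_upwards [h2] with y hy
  rwa [hind (ωy y)] at hy

theorem disint_real {u : X → ℝ} (hum : Measurable u) (hui : Integrable u ω) :
    (∀ᵐ y ∂ρ, Integrable u (ωy y)) ∧
    Integrable (fun y => ∫ x, u x ∂(ωy y)) ρ ∧
    ∫ x, u x ∂ω = ∫ y, (∫ x, u x ∂(ωy y)) ∂ρ := by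
  set p : X → ENNReal := fun x => ENNReal.ofReal (u x) with hp
  set q : X → ENNReal := fun x => ENNReal.ofReal (-u x) with hq
  have hpm : Measurable p := ENNReal.measurable_ofReal.comp hum
  have hqm : Measurable q := ENNReal.measurable_ofReal.comp hum.neg
  obtain ⟨hAm, hAeq⟩ := disint_lintegral ω ρ ωy hdis p hpm
  obtain ⟨hBm, hBeq⟩ := disint_lintegral ω ρ ωy hdis q hqm
  have hbound : ∀ (x : X), p x ≤ (‖u x‖₊ : ENNReal) ∧ q x ≤ (‖u x‖₊ : ENNReal) := by
    intro x
    rw [← enorm_eq_nnnorm, Real.enorm_eq_ofReal_abs]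
    constructor
    · exact ENNReal.ofReal_le_ofReal (le_abs_self _)
    · exact ENNReal.ofReal_le_ofReal (neg_le_abs _)
  have hnfin : ∫⁻ x, (‖u x‖₊ : ENNReal) ∂ω ≠ ⊤ := hui.2.ne
  have hpfin : ∫⁻ y, (∫⁻ x, p x ∂(ωy y)) ∂ρ ≠ ⊤ := by
    rw [← hAeq]
    exact ((lintegral_mono fun x => (hbound x).1).trans_lt hui.2).ne
  have hqfin : ∫⁻ y, (∫⁻ x, q x ∂(ωy y)) ∂ρ ≠ ⊤ := by
    rw [← hBeq]
    exact ((lintegral_mono fun x => (hbound x).2).trans_lt hui.2).ne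
  have hAae : ∀ᵐ y ∂ρ, (∫⁻ x, p x ∂(ωy y)) < ⊤ := ae_lt_top' hAm hpfin
  have hBae : ∀ᵐ y ∂ρ, (∫⁻ x, q x ∂(ωy y)) < ⊤ := ae_lt_top' hBm hqfin
  have hnorm_le : ∀ (μ : Measure X), ∫⁻ x, (‖u x‖₊ : ENNReal) ∂μ ≤
      (∫⁻ x, p x ∂μ) + ∫⁻ x, q x ∂μ := by
    intro μ
    rw [← lintegral_add_left hpm]
    refine lintegral_mono fun x => ?_
    rw [← enorm_eq_nnnorm, Real.enorm_eq_ofReal_abs]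
    rcases le_or_gt 0 (u x) with h | h
    · calc ENNReal.ofReal |u x| = p x := by rw [hp, abs_of_nonneg h]
        _ ≤ p x + q x := le_self_add
    · calc ENNReal.ofReal |u x| = q x := by rw [hq, abs_of_neg h]
        _ ≤ p x + q x := le_add_self
  have hint : ∀ᵐ y ∂ρ, Integrable u (ωy y) ∧
      ∫ x, u x ∂(ωy y) = (∫⁻ x, p x ∂(ωy y)).toReal - (∫⁻ x, q x ∂(ωy y)).toReal := by
    filter_upwards [hAae, hBae] with y hA hB
    have hfin : ∫⁻ x, (‖u x‖₊ : ENNReal) ∂(ωy y) < ⊤ :=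
      (hnorm_le (ωy y)).trans_lt (ENNReal.add_lt_top.2 ⟨hA, hB⟩)
    have hInt : Integrable u (ωy y) := ⟨hum.aestronglyMeasurable, hfin⟩
    exact ⟨hInt, integral_eq_lintegral_pos_part_sub_lintegral_neg_part hInt⟩
  have intA : Integrable (fun y => (∫⁻ x, p x ∂(ωy y)).toReal) ρ :=
    integrable_toReal_of_lintegral_ne_top hAm hpfin
  have intB : Integrable (fun y => (∫⁻ x, q x ∂(ωy y)).toReal) ρ :=
    integrable_toReal_of_lintegral_ne_top hBm hqfin
  refine ⟨by filter_upwards [hint] with y hy using hy.1, ?_, ?_⟩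
  · refine (intA.sub intB).congr ?_
    filter_upwards [hint] with y hy
    exact hy.2.symm
  · calc ∫ x, u x ∂ω = (∫⁻ x, p x ∂ω).toReal - (∫⁻ x, q x ∂ω).toReal :=
        integral_eq_lintegral_pos_part_sub_lintegral_neg_part hui
      _ = (∫⁻ y, (∫⁻ x, p x ∂(ωy y)) ∂ρ).toReal - (∫⁻ y, (∫⁻ x, q x ∂(ωy y)) ∂ρ).toReal := by
        rw [hAeq, hBeq]
      _ = (∫ y, (∫⁻ x, p x ∂(ωy y)).toReal ∂ρ) - ∫ y, (∫⁻ x, q x ∂(ωy y)).toReal ∂ρ := by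
        rw [integral_toReal hAm hAae, integral_toReal hBm hBae]
      _ = ∫ y, ((∫⁻ x, p x ∂(ωy y)).toReal - (∫⁻ x, q x ∂(ωy y)).toReal) ∂ρ :=
        (integral_sub intA intB).symm
      _ = ∫ y, (∫ x, u x ∂(ωy y)) ∂ρ := by
        refine integral_congr_ae ?_
        filter_upwards [hint] with y hy
        exact hy.2.symm

theorem disint_complex {f : X → ℂ} (hfi : Integrable f ω) :
    (∀ᵐ y ∂ρ, Integrable f (ωy y)) ∧
    Integrable (fun y => ∫ x, f x ∂(ωy y)) ρ ∧
    ∫ x, f x ∂ω = ∫ y, (∫ x, f x ∂(ωy y)) ∂ρ := by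
  -- replace `f` by a measurable representative `g`
  set g : X → ℂ := hfi.1.mk f with hgdef
  have hgsm : StronglyMeasurable g := hfi.1.stronglyMeasurable_mk
  have hfg : f =ᵐ[ω] g := hfi.1.ae_eq_mk
  have hgm : Measurable g := hgsm.measurable
  have hgi : Integrable g ω := hfi.congr hfg
  obtain ⟨N, hNsub, hNm, hN0⟩ := exists_measurable_superset_of_null (ae_iff.1 hfg)
  have hnull := disint_null ω ρ ωy hdis hNm hN0
  have hae : ∀ᵐ y ∂ρ, f =ᵐ[ωy y] g := by
    filter_upwards [hnull] with y hy
    exact ae_iff.2 (measure_mono_null hNsub hy)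
  -- the real and imaginary parts
  have hure : Measurable fun x => RCLike.re (g x) := RCLike.measurable_re.comp hgm
  have huim : Measurable fun x => RCLike.im (g x) := RCLike.measurable_im.comp hgm
  obtain ⟨hre_ae, hre_int, hre_eq⟩ := disint_real ω ρ ωy hdis hure hgi.re
  obtain ⟨him_ae, him_int, him_eq⟩ := disint_real ω ρ ωy hdis huim hgi.im
  -- a.e. integrability of `g`
  obtain ⟨hCm, hCeq⟩ := disint_lintegral ω ρ ωy hdis (fun x => (‖g x‖₊ : ENNReal)) hgm.nnnorm.coe_nnreal_ennreal
  have hCfin : ∫⁻ y, (∫⁻ x, (‖g x‖₊ : ENNReal) ∂(ωy y)) ∂ρ ≠ ⊤ := by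
    rw [← hCeq]; exact hgi.2.ne
  have hg_int_ae : ∀ᵐ y ∂ρ, Integrable g (ωy y) := by
    filter_upwards [ae_lt_top' hCm hCfin] with y hy
    exact ⟨hgm.aestronglyMeasurable, hy⟩
  -- a.e. formula for the complex integral of `g`
  have hform : ∀ᵐ y ∂ρ, ∫ x, g x ∂(ωy y) =
      ((∫ x, RCLike.re (g x) ∂(ωy y) : ℝ) : ℂ) +
        ((∫ x, RCLike.im (g x) ∂(ωy y) : ℝ) : ℂ) * RCLike.I := by
    filter_upwards [hg_int_ae] with y hy
    exact (integral_re_add_im hy).symm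
  have hw_int : Integrable (fun y => ((∫ x, RCLike.re (g x) ∂(ωy y) : ℝ) : ℂ) +
      ((∫ x, RCLike.im (g x) ∂(ωy y) : ℝ) : ℂ) * RCLike.I) ρ :=
    (hre_int.ofReal.add (him_int.ofReal.mul_const _))
  have hgconc : Integrable (fun y => ∫ x, g x ∂(ωy y)) ρ ∧
      ∫ x, g x ∂ω = ∫ y, (∫ x, g x ∂(ωy y)) ∂ρ := by
    constructor
    · exact hw_int.congr (by filter_upwards [hform] with y hy; exact hy.symm)
    · calc ∫ x, g x ∂ω = ((∫ x, RCLike.re (g x) ∂ω : ℝ) : ℂ) +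
            ((∫ x, RCLike.im (g x) ∂ω : ℝ) : ℂ) * RCLike.I := (integral_re_add_im hgi).symm
        _ = ((∫ y, (∫ x, RCLike.re (g x) ∂(ωy y)) ∂ρ : ℝ) : ℂ) +
            ((∫ y, (∫ x, RCLike.im (g x) ∂(ωy y)) ∂ρ : ℝ) : ℂ) * RCLike.I := by
          rw [hre_eq, him_eq]
        _ = (∫ y, ((∫ x, RCLike.re (g x) ∂(ωy y) : ℝ) : ℂ) ∂ρ) +
            (∫ y, ((∫ x, RCLike.im (g x) ∂(ωy y) : ℝ) : ℂ) ∂ρ) * RCLike.I := by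
          have e1 : ((∫ y, (∫ x, RCLike.re (g x) ∂(ωy y)) ∂ρ : ℝ) : ℂ) =
              ∫ y, ((∫ x, RCLike.re (g x) ∂(ωy y) : ℝ) : ℂ) ∂ρ := integral_ofReal.symm
          have e2 : ((∫ y, (∫ x, RCLike.im (g x) ∂(ωy y)) ∂ρ : ℝ) : ℂ) =
              ∫ y, ((∫ x, RCLike.im (g x) ∂(ωy y) : ℝ) : ℂ) ∂ρ := integral_ofReal.symm
          rw [e1, e2]
        _ = (∫ y, ((∫ x, RCLike.re (g x) ∂(ωy y) : ℝ) : ℂ) ∂ρ) +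
            (∫ y, ((∫ x, RCLike.im (g x) ∂(ωy y) : ℝ) : ℂ) * RCLike.I ∂ρ) := by
          rw [← integral_mul_const]
        _ = ∫ y, (((∫ x, RCLike.re (g x) ∂(ωy y) : ℝ) : ℂ) +
            ((∫ x, RCLike.im (g x) ∂(ωy y) : ℝ) : ℂ) * RCLike.I) ∂ρ :=
          (integral_add hre_int.ofReal (him_int.ofReal.mul_const _)).symm
        _ = ∫ y, (∫ x, g x ∂(ωy y)) ∂ρ := (integral_congr_ae hform).symm
  refine ⟨?_, ?_, ?_⟩
  · filter_upwards [hg_int_ae, hae] with y h1 h2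
    exact h1.congr h2.symm
  · refine hgconc.1.congr ?_
    filter_upwards [hae] with y hy
    exact integral_congr_ae hy.symm
  · calc ∫ x, f x ∂ω = ∫ x, g x ∂ω := integral_congr_ae hfg
      _ = ∫ y, (∫ x, g x ∂(ωy y)) ∂ρ := hgconc.2
      _ = ∫ y, (∫ x, f x ∂(ωy y)) ∂ρ := by
        refine integral_congr_ae ?_
        filter_upwards [hae] with y hy
        exact (integral_congr_ae hy).symm

end Derived

/-- **disintegration extends from `C_c` to `L¹`.** Let `X`, `Y` be locally
compact second countable (Hausdorff) spaces, `ω` a Radon measure on `X`, `ρ` a Radon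
measure on `Y`, `Ψ : X → Y` an `ω`-measurable map, and `{ω_y}` a family of Radon measures
on `X` with `ω_y` concentrated on `Ψ⁻¹(y)` and `∫ φ dω = ∫_Y (∫ φ dω_y) dρ(y)` for all
`φ ∈ C_c(X)`. Then every `ω`-integrable `f : X → ℂ` is `ω_y`-integrable for `ρ`-a.e. `y`,
`y ↦ ∫ f dω_y` is `ρ`-integrable, and `∫ f dω = ∫_Y (∫ f dω_y) dρ(y)`; moreover the
family `{ω_y}` is unique up to modification on a `ρ`-null set. -/
theorem stmt_17
    {X Y : Type*}
    [TopologicalSpace X] [LocallyCompactSpace X] [SecondCountableTopology X] [T2Space X]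
    [MeasurableSpace X] [BorelSpace X]
    [TopologicalSpace Y] [LocallyCompactSpace Y] [SecondCountableTopology Y] [T2Space Y]
    [MeasurableSpace Y] [BorelSpace Y]
    (ω : Measure X) [IsFiniteMeasureOnCompacts ω]
    (ρ : Measure Y) [IsFiniteMeasureOnCompacts ρ]
    (Ψ : X → Y) (hΨ : AEMeasurable Ψ ω)
    (ωy : Y → Measure X)
    [∀ y, IsFiniteMeasureOnCompacts (ωy y)]
    (hconc : ∀ y, ωy y ((Ψ ⁻¹' {y})ᶜ) = 0)
    (hdis : ∀ φ : X → ℝ, Continuous φ → HasCompactSupport φ →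
      Integrable (fun y => ∫ x, φ x ∂(ωy y)) ρ ∧
      ∫ x, φ x ∂ω = ∫ y, (∫ x, φ x ∂(ωy y)) ∂ρ) :
    -- the disintegration extends to all `ω`-integrable functions
    (∀ f : X → ℂ, Integrable f ω →
      (∀ᵐ y ∂ρ, Integrable f (ωy y)) ∧
      Integrable (fun y => ∫ x, f x ∂(ωy y)) ρ ∧
      ∫ x, f x ∂ω = ∫ y, (∫ x, f x ∂(ωy y)) ∂ρ) ∧
    -- uniqueness of the disintegrating family up to a `ρ`-null set
    (∀ ωy' : Y → Measure X, (∀ y, IsFiniteMeasureOnCompacts (ωy' y)) →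
      (∀ y, ωy' y ((Ψ ⁻¹' {y})ᶜ) = 0) →
      (∀ φ : X → ℝ, Continuous φ → HasCompactSupport φ →
        Integrable (fun y => ∫ x, φ x ∂(ωy' y)) ρ ∧
        ∫ x, φ x ∂ω = ∫ y, (∫ x, φ x ∂(ωy' y)) ∂ρ) →
      ∀ᵐ y ∂ρ, ωy' y = ωy y) := by
  refine ⟨fun f hf => disint_complex ω ρ ωy hdis hf, ?_⟩
  intro ωy' hinst' hconc' hdis'
  haveI : ∀ y, IsFiniteMeasureOnCompacts (ωy' y) := hinst'
  -- concentration as an a.e. statement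
  have hconcAE : ∀ (ωz : Y → Measure X), (∀ y, ωz y ((Ψ ⁻¹' {y})ᶜ) = 0) →
      ∀ y, ∀ᵐ x ∂(ωz y), Ψ x = y := by
    intro ωz hz y
    refine ae_iff.2 ?_
    have : {x | ¬ Ψ x = y} = (Ψ ⁻¹' {y})ᶜ := by
      ext x; simp
    rw [this]
    exact hz y
  -- key: for every compactly supported continuous function, the two families give
  -- a.e. equal integrals
  have hkey : ∀ φ : X → ℝ, Continuous φ → HasCompactSupport φ →
      ∀ᵐ y ∂ρ, ∫ x, φ x ∂(ωy' y) = ∫ x, φ x ∂(ωy y) := by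
    intro φ hφc hφcs
    set h : Y → ℝ := fun y => ∫ x, φ x ∂(ωy y) with hh
    set h' : Y → ℝ := fun y => ∫ x, φ x ∂(ωy' y) with hh'
    have hint : Integrable h ρ := (hdis φ hφc hφcs).1
    have hint' : Integrable h' ρ := (hdis' φ hφc hφcs).1
    -- equality of integrals over every measurable set
    have hset : ∀ S : Set Y, MeasurableSet S → ∫ y in S, h' y ∂ρ = ∫ y in S, h y ∂ρ := by
      intro S hS
      set f : X → ℂ := fun x => ((S.indicator (fun _ => (1 : ℝ)) (Ψ x) * φ x : ℝ) : ℂ) with hfdef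
      have hindm : Measurable (S.indicator (fun _ => (1 : ℝ))) := measurable_const.indicator hS
      have hfm : AEStronglyMeasurable f ω := by
        refine Complex.continuous_ofReal.comp_aestronglyMeasurable ?_
        exact ((hindm.comp_aemeasurable hΨ).mul
          hφc.measurable.aemeasurable).aestronglyMeasurable
      have hfi : Integrable f ω := by
        refine Integrable.mono (hφc.integrable_of_hasCompactSupport hφcs) hfm ?_
        refine Filter.Eventually.of_forall fun x => ?_
        rw [Complex.norm_real]
        rw [Real.norm_eq_abs, Real.norm_eq_abs, abs_mul]
        by_cases hx : Ψ x ∈ S <;> simp [hx]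
      -- value of the fiber integrals of `f`
      have hfib : ∀ (ωz : Y → Measure X), (∀ y, ωz y ((Ψ ⁻¹' {y})ᶜ) = 0) →
          ∀ [∀ y, IsFiniteMeasureOnCompacts (ωz y)], ∀ y : Y,
          ∫ x, f x ∂(ωz y) =
            ((S.indicator (fun _ => (1 : ℝ)) y * ∫ x, φ x ∂(ωz y) : ℝ) : ℂ) := by
        intro ωz hz _ y
        have e1 : ∫ x, f x ∂(ωz y) =
            ∫ x, ((S.indicator (fun _ => (1 : ℝ)) y * φ x : ℝ) : ℂ) ∂(ωz y) := by
          refine integral_congr_ae ?_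
          filter_upwards [hconcAE ωz hz y] with x hx
          rw [hfdef]
          simp only [hx]
        have e2 : ∫ x, ((S.indicator (fun _ => (1 : ℝ)) y * φ x : ℝ) : ℂ) ∂(ωz y) =
            ((∫ x, S.indicator (fun _ => (1 : ℝ)) y * φ x ∂(ωz y) : ℝ) : ℂ) :=
          integral_ofReal
        rw [e1, e2, integral_const_mul]
      -- the `Y`-integral of the fiber integrals
      have hY : ∀ (ωz : Y → Measure X), (∀ y, ωz y ((Ψ ⁻¹' {y})ᶜ) = 0) →
          ∀ [∀ y, IsFiniteMeasureOnCompacts (ωz y)],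
          Integrable (fun y => ∫ x, φ x ∂(ωz y)) ρ →
          ∫ y, (∫ x, f x ∂(ωz y)) ∂ρ =
            ((∫ y in S, (∫ x, φ x ∂(ωz y)) ∂ρ : ℝ) : ℂ) := by
        intro ωz hz _ hzint
        have e1 : ∫ y, (∫ x, f x ∂(ωz y)) ∂ρ =
            ∫ y, ((S.indicator (fun _ => (1 : ℝ)) y * ∫ x, φ x ∂(ωz y) : ℝ) : ℂ) ∂ρ :=
          integral_congr_ae (Filter.Eventually.of_forall fun y => hfib ωz hz y)
        have e2 : ∫ y, ((S.indicator (fun _ => (1 : ℝ)) y * ∫ x, φ x ∂(ωz y) : ℝ) : ℂ) ∂ρ =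
            ((∫ y, S.indicator (fun _ => (1 : ℝ)) y * (∫ x, φ x ∂(ωz y)) ∂ρ : ℝ) : ℂ) :=
          integral_ofReal
        have e3 : (fun y => S.indicator (fun _ => (1 : ℝ)) y * (∫ x, φ x ∂(ωz y))) =
            S.indicator (fun y => ∫ x, φ x ∂(ωz y)) := by
          funext y
          by_cases hy : y ∈ S <;> simp [hy]
        rw [e1, e2, e3, integral_indicator hS]
      have h1 := (disint_complex ω ρ ωy hdis hfi).2.2
      have h2 := (disint_complex ω ρ ωy' hdis' hfi).2.2
      have : ((∫ y in S, h' y ∂ρ : ℝ) : ℂ) = ((∫ y in S, h y ∂ρ : ℝ) : ℂ) := by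
        rw [← hY ωy' hconc' hint', ← hY ωy hconc hint, ← h1, ← h2]
      exact_mod_cast this
    exact ae_eq_of_forall_setIntegral_eq_of_sigmaFinite
      (fun s hs _ => hint'.integrableOn) (fun s hs _ => hint.integrableOn)
      (fun s hs _ => hset s hs)
  -- a countable family of open sets determining measures
  set B : Set (Set X) := TopologicalSpace.countableBasis X with hB
  have hBc : B.Countable := TopologicalSpace.countable_countableBasis X
  have hBbasis : TopologicalSpace.IsTopologicalBasis B :=
    TopologicalSpace.isBasis_countableBasis X
  set D : Set (Set X) := (fun F => ⋃₀ F) '' {F : Set (Set X) | F.Finite ∧ F ⊆ B} with hD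
  have hDc : D.Countable := (Set.countable_setOf_finite_subset hBc).image _
  have hDopen : ∀ s ∈ D, IsOpen s := by
    rintro s ⟨F, ⟨hF1, hF2⟩, rfl⟩
    exact isOpen_sUnion fun t ht => hBbasis.isOpen (hF2 ht)
  haveI : Countable ↥D := hDc.to_subtype
  -- choose approximating sequences for each element of `D`
  choose ψ hψc hψcs hψ0 hψmono hψsup using fun s : D => exists_cc_seq (hDopen s s.2)
  have hAE : ∀ᵐ y ∂ρ, ∀ (s : D) (n : ℕ),
      ∫ x, ψ s n x ∂(ωy' y) = ∫ x, ψ s n x ∂(ωy y) := by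
    rw [ae_all_iff]
    intro s
    rw [ae_all_iff]
    intro n
    exact hkey _ (hψc s n) (hψcs s n)
  filter_upwards [hAE] with y hy
  -- equality on the countable family
  have hDeq : ∀ s : D, ωy' y (s : Set X) = ωy y (s : Set X) := by
    intro s
    rw [measure_open_eq_iSup (ωy' y) (hDopen s s.2) (hψc s) (hψmono s) (hψsup s),
      measure_open_eq_iSup (ωy y) (hDopen s s.2) (hψc s) (hψmono s) (hψsup s)]
    refine iSup_congr fun n => ?_
    rw [← ofReal_integral_eq_lintegral_ofReal
        ((hψc s n).integrable_of_hasCompactSupport (hψcs s n))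
        (Filter.Eventually.of_forall (hψ0 s n)),
      ← ofReal_integral_eq_lintegral_ofReal
        ((hψc s n).integrable_of_hasCompactSupport (hψcs s n))
        (Filter.Eventually.of_forall (hψ0 s n)),
      hy s n]
  -- equality on all open sets
  have hopen : ∀ V : Set X, IsOpen V → ωy' y V = ωy y V := by
    intro V hV
    set C : Set (Set X) := {s ∈ B | s ⊆ V} with hC
    have hCV : ⋃₀ C = V := (hBbasis.open_eq_sUnion' hV).symm
    have hCc : C.Countable := hBc.mono fun s hs => hs.1
    rcases C.eq_empty_or_nonempty with hCe | hCne
    · rw [hCe] at hCV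
      simp only [Set.sUnion_empty] at hCV
      rw [← hCV]
      simp
    · obtain ⟨e, hCe⟩ := hCc.exists_eq_range hCne
      set F : ℕ → Set X := fun n => ⋃₀ (e '' Set.Iic n) with hF
      have hFD : ∀ n, F n ∈ D := by
        intro n
        exact ⟨e '' Set.Iic n, ⟨(Set.finite_Iic n).image e, by
          rintro s ⟨i, _, rfl⟩
          have : e i ∈ C := hCe ▸ Set.mem_range_self i
          exact this.1⟩, rfl⟩
      have hFmono : Monotone F := fun m n hmn =>
        Set.sUnion_mono (Set.image_mono (Set.Iic_subset_Iic.2 hmn))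
      have hFV : ⋃ n, F n = V := by
        apply Set.Subset.antisymm
        · refine Set.iUnion_subset fun n => Set.sUnion_subset ?_
          rintro s ⟨i, _, rfl⟩
          have : e i ∈ C := hCe ▸ Set.mem_range_self i
          exact this.2
        · intro x hx
          rw [← hCV] at hx
          obtain ⟨s, hsC, hxs⟩ := hx
          rw [hCe] at hsC
          obtain ⟨i, rfl⟩ := hsC
          exact Set.mem_iUnion.2 ⟨i, Set.mem_sUnion.2 ⟨e i, ⟨i, Set.mem_Iic.2 le_rfl, rfl⟩, hxs⟩⟩
      have hm : ∀ (μ : Measure X), μ V = ⨆ n, μ (F n) := by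
        intro μ
        rw [← hFV]
        exact Monotone.measure_iUnion hFmono
      rw [hm (ωy' y), hm (ωy y)]
      exact iSup_congr fun n => hDeq ⟨F n, hFD n⟩
  -- conclude by outer regularity
  refine Measure.ext fun A hA => ?_
  rw [Set.measure_eq_iInf_isOpen A (ωy' y), Set.measure_eq_iInf_isOpen A (ωy y)]
  exact iInf_congr fun U => iInf_congr fun hAU => iInf_congr fun hU => hopen U hU
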